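/- Let 0 < q < 1, p > 1, and α < 1 - 1/p. For every nonnegative function f on (0,1], not identically zero on {q^k : k ≥ 0}, the strict inequality ∑_{j=0}^∞ q^{j(p(α-1)+1)} (∑_{i=j}^∞ q^{i(1-α)} f(q^i))^p < (1-q)^{-p}(1 - q^{(p-1)/p-α})^{-p} ∑_{i=0}^∞ q^i f(q^i)^p holds (assuming the right-hand side is finite); equivalently ∫_0^1 x^{p(α-1)}(∫_0^x t^{-α} f d_q t)^p d_q x < [(p-1)/p - α]_q^{-p} ∫_0^1 f^p d_q t. -/

import Mathlib

open scoped ENNReal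

lemma holder_tsum_aux {f g : ℕ → ℝ≥0∞} {p q : ℝ} (hpq : Real.HolderConjugate p q) :
    ∑' i, f i * g i ≤ (∑' i, f i ^ p) ^ (1 / p) * (∑' i, g i ^ q) ^ (1 / q) := by
  rw [ENNReal.tsum_eq_iSup_sum]
  refine iSup_le fun s => le_trans (ENNReal.inner_le_Lp_mul_Lq s f g hpq) ?_
  have h1 : (0:ℝ) ≤ 1 / p := le_of_lt hpq.one_div_pos
  have h2 : (0:ℝ) ≤ 1 / q := le_of_lt hpq.symm.one_div_pos
  exact mul_le_mul' (ENNReal.rpow_le_rpow (ENNReal.sum_le_tsum s) h1)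
    (ENNReal.rpow_le_rpow (ENNReal.sum_le_tsum s) h2)

theorem q_hardy_finite_interval (q p α : ℝ) (hq : 0 < q) (hq1 : q < 1) (hp : 1 < p)
    (hα : α < 1 - 1 / p) (f : ℝ → ℝ≥0∞)
    (hf0 : ∃ k : ℕ, f (q ^ (k : ℝ)) ≠ 0)
    (hfin : (∑' i : ℕ, (ENNReal.ofReal q) ^ (i : ℝ) * (f (q ^ (i : ℝ))) ^ p) ≠ ⊤) :
    ∑' j : ℕ, (ENNReal.ofReal q) ^ ((j : ℝ) * (p * (α - 1) + 1)) *
        (∑' m : ℕ, (ENNReal.ofReal q) ^ (((j : ℝ) + (m : ℝ)) * (1 - α)) *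
          f (q ^ ((j : ℝ) + (m : ℝ)))) ^ p
      < ENNReal.ofReal (((1 - q) * (1 - q ^ ((p - 1) / p - α))) ^ (-p)) *
        ∑' i : ℕ, (ENNReal.ofReal q) ^ (i : ℝ) * (f (q ^ (i : ℝ))) ^ p := by
  have hp0 : (0:ℝ) < p := lt_trans one_pos hp
  set Q : ℝ≥0∞ := ENNReal.ofReal q with hQdef
  have hQ0 : Q ≠ 0 := by simp [hQdef, ENNReal.ofReal_eq_zero, not_le, hq]
  have hQtop : Q ≠ ⊤ := ENNReal.ofReal_ne_top
  set δ : ℝ := (p - 1) / p - α with hδdef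
  have hδ : 0 < δ := by
    have h1 : (p-1)/p = 1 - 1/p := by field_simp
    rw [hδdef, h1]; linarith
  set c : ℝ := p * (α - 1) + 1 with hcdef
  have hc : c = -(p * δ) := by
    rw [hcdef, hδdef]; field_simp; ring
  have hqδ0 : 0 < q ^ δ := Real.rpow_pos_of_pos hq δ
  have hqδ1 : q ^ δ < 1 := Real.rpow_lt_one hq.le hq1 hδ
  have hpne : p ≠ 0 := hp0.ne'
  have hp1ne : p - 1 ≠ 0 := sub_ne_zero.mpr (ne_of_gt hp)
  clear_value δ c
  set A : ℕ → ℝ≥0∞ := fun i => Q ^ ((i:ℝ) * (1 - α)) * f (q ^ (i:ℝ)) with hAdef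
  set T : ℝ≥0∞ := ∑' i : ℕ, Q ^ (i:ℝ) * (f (q ^ (i:ℝ))) ^ p with hTdef
  clear_value A T
  -- key identity
  have key : ∀ i : ℕ, Q ^ ((i:ℝ) * c) * A i ^ p = Q ^ (i:ℝ) * (f (q ^ (i:ℝ))) ^ p := by
    intro i
    rw [hAdef]
    rw [ENNReal.mul_rpow_of_nonneg _ _ hp0.le, ← ENNReal.rpow_mul, ← mul_assoc,
      ← ENNReal.rpow_add _ _ hQ0 hQtop]
    congr 2
    rw [hcdef]; ring
  have hT0 : T ≠ 0 := by
    obtain ⟨k, hk⟩ := hf0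
    intro h
    have hle : Q ^ (k:ℝ) * (f (q ^ (k:ℝ))) ^ p ≤ T := by
      rw [hTdef]
      exact ENNReal.le_tsum (f := fun i : ℕ => Q ^ (i:ℝ) * (f (q ^ (i:ℝ))) ^ p) k
    rw [h, le_zero_iff, mul_eq_zero] at hle
    rcases hle with h1 | h1
    · rw [ENNReal.rpow_eq_zero_iff] at h1
      rcases h1 with ⟨h1, _⟩ | ⟨_, h2⟩
      · exact hQ0 h1
      · have : (0:ℝ) ≤ (k:ℝ) := Nat.cast_nonneg k
        linarith
    · rw [ENNReal.rpow_eq_zero_iff] at h1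
      rcases h1 with ⟨h1, _⟩ | ⟨_, h2⟩
      · exact hk h1
      · linarith
  set G : ℝ≥0∞ := ∑' m : ℕ, Q ^ (δ * (m:ℝ)) with hGdef
  clear_value G
  have hQδ : Q ^ δ = ENNReal.ofReal (q ^ δ) := ENNReal.ofReal_rpow_of_pos hq
  have hG : G = ENNReal.ofReal ((1 - q ^ δ)⁻¹) := by
    rw [hGdef]
    have h1 : ∀ m : ℕ, Q ^ (δ * (m:ℝ)) = (Q ^ δ) ^ m := fun m => by
      rw [ENNReal.rpow_mul, ENNReal.rpow_natCast]
    rw [tsum_congr h1, ENNReal.tsum_geometric, hQδ,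
      ← ENNReal.ofReal_one, ← ENNReal.ofReal_sub _ hqδ0.le,
      ENNReal.ofReal_inv_of_pos (by linarith)]
  have hGne0 : G ≠ 0 := by
    rw [hG]
    simp only [ne_eq, ENNReal.ofReal_eq_zero, not_le]
    exact inv_pos.mpr (by linarith)
  have hGtop : G ≠ ⊤ := by rw [hG]; exact ENNReal.ofReal_ne_top
  set W : ℕ → ℝ≥0∞ := fun j => ∑' m : ℕ, Q ^ (-(δ*(p-1)) * (m:ℝ)) * A (j+m) ^ p with hWdef
  set B : ℕ → ℝ≥0∞ := fun j => ∑' m : ℕ, A (j+m) with hBdef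
  clear_value W B
  have holder : ∀ j : ℕ, (B j) ^ p ≤ G ^ (p-1) * W j := by
    intro j
    have hpq : (p / (p-1)).HolderConjugate p := (Real.HolderConjugate.conjExponent hp).symm
    have h1 : B j = ∑' m : ℕ,
        (Q ^ (δ*(p-1)/p * (m:ℝ))) * (Q ^ (-(δ*(p-1)/p) * (m:ℝ)) * A (j+m)) := by
      rw [hBdef]
      refine tsum_congr fun m => ?_
      rw [← mul_assoc, ← ENNReal.rpow_add _ _ hQ0 hQtop]
      have he : δ*(p-1)/p * (m:ℝ) + -(δ*(p-1)/p) * (m:ℝ) = 0 := by ring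
      rw [he, ENNReal.rpow_zero, one_mul]
    have h2 := holder_tsum_aux (f := fun m : ℕ => Q ^ (δ*(p-1)/p * (m:ℝ)))
      (g := fun m : ℕ => Q ^ (-(δ*(p-1)/p) * (m:ℝ)) * A (j+m)) hpq
    have hsum1 : (∑' m : ℕ, (Q ^ (δ*(p-1)/p * (m:ℝ))) ^ (p/(p-1))) = G := by
      rw [hGdef]
      refine tsum_congr fun m => ?_
      rw [← ENNReal.rpow_mul]
      congr 1
      field_simp
    have hsum2 : (∑' m : ℕ, (Q ^ (-(δ*(p-1)/p) * (m:ℝ)) * A (j+m)) ^ p) = W j := by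
      rw [hWdef]
      refine tsum_congr fun m => ?_
      rw [ENNReal.mul_rpow_of_nonneg _ _ hp0.le, ← ENNReal.rpow_mul]
      congr 2
      field_simp
    beta_reduce at h2
    rw [hsum1, hsum2] at h2
    calc (B j) ^ p ≤ (G ^ (1/(p/(p-1))) * (W j) ^ (1/p)) ^ p := by
          rw [h1]; exact ENNReal.rpow_le_rpow h2 hp0.le
      _ = G ^ (p-1) * W j := by
          rw [ENNReal.mul_rpow_of_nonneg _ _ hp0.le, ← ENNReal.rpow_mul, ← ENNReal.rpow_mul]
          congr 2
          · rw [one_div_div]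
            field_simp
          · rw [one_div, inv_mul_cancel₀ hp0.ne', ENNReal.rpow_one]
  have step1 : (∑' j : ℕ, Q ^ ((j:ℝ)*c) * (B j)^p)
      ≤ G^(p-1) * ∑' j : ℕ, Q ^ ((j:ℝ)*c) * W j := by
    rw [← ENNReal.tsum_mul_left]
    refine ENNReal.tsum_le_tsum fun j => ?_
    rw [mul_left_comm]
    exact mul_le_mul_right (holder j) _
  have tail : ∀ m : ℕ, (∑' j : ℕ, Q ^ ((j:ℝ)*c) * A (j+m)^p) ≤ Q ^ (-(m:ℝ)*c) * T := by
    intro m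
    have hTalt : (∑' i : ℕ, Q ^ ((i:ℝ)*c) * A i ^ p) = T := by
      rw [hTdef]; exact tsum_congr key
    have h1 : ∀ j : ℕ, Q ^ ((j:ℝ)*c) * A (j+m)^p
        = Q ^ (-(m:ℝ)*c) * (Q ^ ((((j+m:ℕ)):ℝ)*c) * A (j+m)^p) := by
      intro j
      rw [← mul_assoc, ← ENNReal.rpow_add _ _ hQ0 hQtop]
      congr 2
      push_cast
      ring
    rw [tsum_congr h1, ENNReal.tsum_mul_left, ← hTalt]
    exact mul_le_mul_right
      (ENNReal.tsum_comp_le_tsum_of_injective (add_left_injective m) _) _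
  have step2 : (∑' j : ℕ, Q ^ ((j:ℝ)*c) * W j) ≤ G * T := by
    have hswap : (∑' j : ℕ, Q ^ ((j:ℝ)*c) * W j)
        = ∑' m : ℕ, Q ^ (-(δ*(p-1)) * (m:ℝ)) * ∑' j : ℕ, Q ^ ((j:ℝ)*c) * A (j+m)^p := by
      rw [hWdef]
      calc ∑' j : ℕ, Q^((j:ℝ)*c) * ∑' m : ℕ, Q ^ (-(δ*(p-1)) * (m:ℝ)) * A (j+m)^p
          = ∑' j : ℕ, ∑' m : ℕ, Q^((j:ℝ)*c) * (Q ^ (-(δ*(p-1)) * (m:ℝ)) * A (j+m)^p) :=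
            tsum_congr fun j => ENNReal.tsum_mul_left.symm
        _ = ∑' m : ℕ, ∑' j : ℕ, Q^((j:ℝ)*c) * (Q ^ (-(δ*(p-1)) * (m:ℝ)) * A (j+m)^p) :=
            ENNReal.tsum_comm
        _ = ∑' m : ℕ, Q ^ (-(δ*(p-1)) * (m:ℝ)) * ∑' j : ℕ, Q^((j:ℝ)*c) * A (j+m)^p := by
            refine tsum_congr fun m => ?_
            rw [← ENNReal.tsum_mul_left]
            exact tsum_congr fun j => by ring
    rw [hswap]
    calc ∑' m : ℕ, Q ^ (-(δ*(p-1)) * (m:ℝ)) * (∑' j : ℕ, Q^((j:ℝ)*c) * A (j+m)^p)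
        ≤ ∑' m : ℕ, Q ^ (-(δ*(p-1)) * (m:ℝ)) * (Q ^ (-(m:ℝ)*c) * T) :=
          ENNReal.tsum_le_tsum fun m => mul_le_mul_right (tail m) _
      _ = ∑' m : ℕ, Q ^ (δ * (m:ℝ)) * T := by
          refine tsum_congr fun m => ?_
          rw [← mul_assoc, ← ENNReal.rpow_add _ _ hQ0 hQtop]
          congr 2
          rw [hc]; ring
      _ = G * T := by rw [ENNReal.tsum_mul_right, hGdef]
  have main : (∑' j : ℕ, Q ^ ((j:ℝ)*c) * (B j)^p) ≤ G ^ p * T := by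
    refine step1.trans ?_
    calc G^(p-1) * (∑' j : ℕ, Q^((j:ℝ)*c) * W j) ≤ G^(p-1) * (G * T) :=
          mul_le_mul_right step2 _
      _ = G ^ p * T := by
          rw [← mul_assoc]
          congr 1
          have h3 : G^(p-1) * G^(1:ℝ) = G^p := by
            rw [← ENNReal.rpow_add _ _ hGne0 hGtop]
            norm_num
          rwa [ENNReal.rpow_one] at h3
  have hGp : G ^ p = ENNReal.ofReal ((1 - q^δ) ^ (-p)) := by
    rw [hG, ENNReal.ofReal_rpow_of_pos (inv_pos.mpr (by linarith))]
    congr 1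
    rw [Real.inv_rpow (by linarith), ← Real.rpow_neg (by linarith)]
  have hconst : G ^ p < ENNReal.ofReal (((1-q)*(1-q^δ))^(-p)) := by
    rw [hGp, ENNReal.ofReal_lt_ofReal_iff
      (Real.rpow_pos_of_pos (mul_pos (by linarith) (by linarith)) _)]
    exact Real.rpow_lt_rpow_of_neg (mul_pos (by linarith) (by linarith))
      (by nlinarith) (by linarith)
  have hLHS : (∑' j : ℕ, Q ^ ((j:ℝ) * c) *
      (∑' m : ℕ, Q ^ (((j:ℝ) + (m:ℝ)) * (1 - α)) * f (q ^ ((j:ℝ) + (m:ℝ)))) ^ p)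
      = ∑' j : ℕ, Q ^ ((j:ℝ)*c) * (B j)^p := by
    refine tsum_congr fun j => ?_
    congr 2
    rw [hBdef]
    refine tsum_congr fun m => ?_
    rw [hAdef]
    push_cast
    ring_nf
  calc (∑' j : ℕ, Q ^ ((j:ℝ) * c) *
      (∑' m : ℕ, Q ^ (((j:ℝ) + (m:ℝ)) * (1 - α)) * f (q ^ ((j:ℝ) + (m:ℝ)))) ^ p)
      = ∑' j : ℕ, Q ^ ((j:ℝ)*c) * (B j)^p := hLHS
    _ ≤ G ^ p * T := main
    _ < ENNReal.ofReal (((1-q)*(1-q^δ))^(-p)) * T :=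
        (ENNReal.mul_lt_mul_iff_left hT0 hfin).mpr hconst
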